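/- Let V be a finite-dimensional vector space over ZMod 2, let B be a symmetric bilinear form on V with B(x,x) = 0 for all x, and let q be a ℤ/2-quadratic enhancement of B. If e_1,…,e_g,f_1,…,f_g and e'_1,…,e'_g,f'_1,…,f'_g are two symplectic bases for B, then Σ_{i=1}^{g} q(e_i)·q(f_i) = Σ_{i=1}^{g} q(e'_i)·q(f'_i) in ZMod 2; that is, the Arf invariant of q is independent of the choice of symplectic basis. -/

import Mathlib

private def chi (x : ZMod 2) : ℤ := if x = 0 then 1 else -1

private lemma chi_add : ∀ x y : ZMod 2, chi (x + y) = chi x * chi y := by decide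

private lemma chi_inj : ∀ x y : ZMod 2, chi x = chi y → x = y := by decide

private lemma chi_sum {ι : Type*} (s : Finset ι) (t : ι → ZMod 2) :
    chi (∑ i ∈ s, t i) = ∏ i ∈ s, chi (t i) := by
  induction s using Finset.cons_induction with
  | empty => simp [chi]
  | cons a s ha ih => rw [Finset.sum_cons, Finset.prod_cons, chi_add, ih]

private lemma zmod2_cases : ∀ a : ZMod 2, a = 0 ∨ a = 1 := by decide

private lemma key_sum : ∀ u v : ZMod 2,
    (∑ p : ZMod 2 × ZMod 2, chi (p.1 * u + p.2 * v + p.1 * p.2)) = 2 * chi (u * v) := by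
  decide

section Gauss

variable {V : Type*} [AddCommGroup V] [Module (ZMod 2) V]
  (B : LinearMap.BilinForm (ZMod 2) V)
  (q : V → ZMod 2)

private lemma q_zero (hq : ∀ x y : V, q (x + y) = q x + q y + B x y) : q 0 = 0 := by
  have h := hq 0 0
  simp only [add_zero, map_zero, LinearMap.zero_apply] at h
  exact (add_eq_left.mp h.symm)

private lemma q_smul (hq : ∀ x y : V, q (x + y) = q x + q y + B x y)
    (a : ZMod 2) (x : V) : q (a • x) = a * q x := by
  rcases zmod2_cases a with rfl | rfl
  · simpa using q_zero B q hq
  · simp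

private lemma q_sum (hq : ∀ x y : V, q (x + y) = q x + q y + B x y)
    {ι : Type*} (s : Finset ι) (v : ι → V)
    (horth : ∀ i ∈ s, ∀ j ∈ s, i ≠ j → B (v i) (v j) = 0) :
    q (∑ i ∈ s, v i) = ∑ i ∈ s, q (v i) := by
  induction s using Finset.cons_induction with
  | empty => simpa using q_zero B q hq
  | cons a s ha ih =>
    rw [Finset.sum_cons, Finset.sum_cons, hq,
      ih (fun i hi j hj hij =>
        horth i (Finset.mem_cons_of_mem hi) j (Finset.mem_cons_of_mem hj) hij)]
    have hB : B (v a) (∑ i ∈ s, v i) = 0 := by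
      rw [map_sum]
      refine Finset.sum_eq_zero fun j hj => ?_
      exact horth a (Finset.mem_cons_self a s) j (Finset.mem_cons_of_mem hj)
        (by rintro rfl; exact ha hj)
    rw [hB, add_zero]

private lemma gauss [Fintype V]
    (hsymm : ∀ x y : V, B x y = B y x)
    (hq : ∀ x y : V, q (x + y) = q x + q y + B x y)
    (g : ℕ) (b : Module.Basis (Fin g ⊕ Fin g) (ZMod 2) V)
    (hee : ∀ i j : Fin g, B (b (Sum.inl i)) (b (Sum.inl j)) = 0)
    (hff : ∀ i j : Fin g, B (b (Sum.inr i)) (b (Sum.inr j)) = 0)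
    (hef : ∀ i j : Fin g, B (b (Sum.inl i)) (b (Sum.inr j)) = if i = j then 1 else 0) :
    ∑ x : V, chi (q x) =
      2 ^ g * chi (∑ i : Fin g, q (b (Sum.inl i)) * q (b (Sum.inr i))) := by
  classical
  have hfe : ∀ i j : Fin g, B (b (Sum.inr i)) (b (Sum.inl j)) = if j = i then 1 else 0 :=
    fun i j => by rw [hsymm]; exact hef j i
  -- reindex the sum over V by coordinates
  have hre : ∑ x : V, chi (q x)
      = ∑ c : (Fin g ⊕ Fin g) → ZMod 2, chi (q (b.equivFun.symm c)) :=
    (Equiv.sum_comp b.equivFun.symm.toEquiv (fun x => chi (q x))).symm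
  rw [hre]
  -- compute q on each vector
  have hqc : ∀ c : (Fin g ⊕ Fin g) → ZMod 2,
      q (b.equivFun.symm c) = ∑ i : Fin g,
        (c (Sum.inl i) * q (b (Sum.inl i)) + c (Sum.inr i) * q (b (Sum.inr i))
          + c (Sum.inl i) * c (Sum.inr i)) := by
    intro c
    rw [b.equivFun_symm_apply]
    have hx : ∑ j : Fin g ⊕ Fin g, c j • b j
        = ∑ i : Fin g, (c (Sum.inl i) • b (Sum.inl i) + c (Sum.inr i) • b (Sum.inr i)) := by
      rw [Fintype.sum_sum_type, Finset.sum_add_distrib]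
    rw [hx, q_sum B q hq]
    · refine Finset.sum_congr rfl fun i _ => ?_
      rw [hq, q_smul B q hq, q_smul B q hq]
      have hB2 : B (c (Sum.inl i) • b (Sum.inl i)) (c (Sum.inr i) • b (Sum.inr i))
          = c (Sum.inl i) * c (Sum.inr i) := by
        simp only [map_smul, LinearMap.smul_apply, smul_eq_mul, hef]
        simp [mul_comm]
      rw [hB2]
    · intro i _ j _ hij
      simp only [map_add, LinearMap.add_apply, map_smul, LinearMap.smul_apply,
        smul_eq_mul, hee, hff, hef, hfe]
      rw [if_neg hij, if_neg (Ne.symm hij)]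
      ring
  simp only [hqc, chi_sum Finset.univ]
  -- reindex coordinate functions as pairs
  have hre2 : (∑ c : (Fin g ⊕ Fin g) → ZMod 2, ∏ i : Fin g,
        chi (c (Sum.inl i) * q (b (Sum.inl i)) + c (Sum.inr i) * q (b (Sum.inr i))
          + c (Sum.inl i) * c (Sum.inr i)))
      = ∑ d : Fin g → ZMod 2 × ZMod 2, ∏ i : Fin g,
        chi ((d i).1 * q (b (Sum.inl i)) + (d i).2 * q (b (Sum.inr i)) + (d i).1 * (d i).2) := by
    refine Fintype.sum_equiv
      ((Equiv.sumArrowEquivProdArrow _ _ _).trans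
        (Equiv.arrowProdEquivProdArrow _ _ _).symm)
      _ _ (fun c => ?_)
    rfl
  rw [hre2, ← Fintype.prod_sum (fun i (p : ZMod 2 × ZMod 2) =>
      chi (p.1 * q (b (Sum.inl i)) + p.2 * q (b (Sum.inr i)) + p.1 * p.2))]
  rw [Finset.prod_congr rfl (fun i _ => key_sum (q (b (Sum.inl i))) (q (b (Sum.inr i)))),
    Finset.prod_mul_distrib, Finset.prod_const]
  simp

end Gauss

/-- The Arf invariant `Σᵢ q(eᵢ)·q(fᵢ)` of a `ℤ/2`-quadratic enhancement of an alternating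
symmetric bilinear form on a `ZMod 2`-vector space does not depend on the choice of
symplectic basis. -/
theorem arf_invariant_well_defined
    (V : Type*) [AddCommGroup V] [Module (ZMod 2) V] [FiniteDimensional (ZMod 2) V]
    (B : LinearMap.BilinForm (ZMod 2) V)
    (hsymm : ∀ x y : V, B x y = B y x)
    (halt : ∀ x : V, B x x = 0)
    (q : V → ZMod 2)
    (hq : ∀ x y : V, q (x + y) = q x + q y + B x y)
    (g : ℕ) (b b' : Module.Basis (Fin g ⊕ Fin g) (ZMod 2) V)
    (hee : ∀ i j : Fin g, B (b (Sum.inl i)) (b (Sum.inl j)) = 0)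
    (hff : ∀ i j : Fin g, B (b (Sum.inr i)) (b (Sum.inr j)) = 0)
    (hef : ∀ i j : Fin g, B (b (Sum.inl i)) (b (Sum.inr j)) = if i = j then 1 else 0)
    (hee' : ∀ i j : Fin g, B (b' (Sum.inl i)) (b' (Sum.inl j)) = 0)
    (hff' : ∀ i j : Fin g, B (b' (Sum.inr i)) (b' (Sum.inr j)) = 0)
    (hef' : ∀ i j : Fin g, B (b' (Sum.inl i)) (b' (Sum.inr j)) = if i = j then 1 else 0) :
    ∑ i : Fin g, q (b (Sum.inl i)) * q (b (Sum.inr i)) =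
      ∑ i : Fin g, q (b' (Sum.inl i)) * q (b' (Sum.inr i)) := by
  have : Finite V := Module.finite_of_finite (ZMod 2)
  have : Fintype V := Fintype.ofFinite V
  have h1 := gauss B q hsymm hq g b hee hff hef
  have h2 := gauss B q hsymm hq g b' hee' hff' hef'
  apply chi_inj
  have h := h1.symm.trans h2
  exact mul_left_cancel₀ (by positivity) h
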